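/- There exists a constant c' > 0 such that for all integers k ≥ 1 and i ≥ 0, the series ∑_{t = i+1}^∞ 2^{(2^t + 2)/k} · Real.exp (−(2 : ℝ)^{2^t / k + 2^t − 2^{i+1}}) is summable and its sum is at most c'. (This is the bound E[Y] = O(k · ln n) per value of s in the expected-dimension analysis: the t-th term bounds R(t)/(c·ln n) times the probability that a sampled set misses all copies of a point of S_i.) -/

import Mathlib

open Real

private lemma matousek_key (k i t : ℕ) (hk : 1 ≤ k) :
    (2 : ℝ) ^ (((2 : ℝ) ^ (i + 1 + t) + 2) / (k : ℝ)) *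
      Real.exp (-((2 : ℝ) ^ ((2 : ℝ) ^ (i + 1 + t) / (k : ℝ) +
        (2 : ℝ) ^ (i + 1 + t) - (2 : ℝ) ^ (i + 1)))) ≤ 4 * Real.exp (-(t : ℝ)) := by
  have hk0 : (0:ℝ) < k := by exact_mod_cast hk
  have hk1 : (1:ℝ) ≤ k := by exact_mod_cast hk
  set A : ℝ := (2:ℝ) ^ (i + 1 + t) with hAdef
  set B : ℝ := (2:ℝ) ^ (i + 1) with hBdef
  have hB1 : (1:ℝ) ≤ B := one_le_pow₀ one_le_two
  have h2t1 : (1:ℝ) ≤ (2:ℝ) ^ t := one_le_pow₀ one_le_two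
  have hAB : A = B * 2 ^ t := by rw [hAdef, hBdef, pow_add]
  have hBA : B ≤ A := by nlinarith
  have ht2t : (t:ℝ) + 1 ≤ (2:ℝ) ^ t := by
    exact_mod_cast Nat.succ_le_of_lt (Nat.lt_two_pow_self (n := t))
  -- D = A - B ≥ t
  have hD : (t:ℝ) ≤ A - B := by nlinarith
  have hD0 : (0:ℝ) ≤ A - B := le_trans (Nat.cast_nonneg t) hD
  set u : ℝ := A / k with hudef
  have hu0 : 0 ≤ u := by positivity
  -- split first factor
  have hsplit1 : (2:ℝ) ^ ((A + 2) / (k:ℝ)) = (2:ℝ) ^ u * (2:ℝ) ^ ((2:ℝ)/k) := by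
    rw [← Real.rpow_add two_pos, hudef, ← add_div]
  have h2k4 : (2:ℝ) ^ ((2:ℝ)/k) ≤ 4 := by
    have h1 : (2:ℝ)/k ≤ 2 := by
      rw [div_le_iff₀ hk0]; nlinarith
    calc (2:ℝ) ^ ((2:ℝ)/k) ≤ (2:ℝ) ^ (2:ℝ) :=
          Real.rpow_le_rpow_of_exponent_le one_le_two h1
      _ = 4 := by
          rw [show (2:ℝ) = ((2:ℕ):ℝ) from by norm_num, Real.rpow_natCast]; norm_num
  -- split exp argument
  have hsplit2 : (2:ℝ) ^ (u + A - B) = (2:ℝ) ^ u * (2:ℝ) ^ (A - B) := by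
    rw [show u + A - B = u + (A - B) by ring, Real.rpow_add two_pos]
  set P : ℝ := (2:ℝ) ^ u with hPdef
  set Q : ℝ := (2:ℝ) ^ (A - B) with hQdef
  have hP1 : (1:ℝ) ≤ P := by
    rw [hPdef, show (1:ℝ) = (2:ℝ) ^ (0:ℝ) from (Real.rpow_zero 2).symm]
    exact Real.rpow_le_rpow_of_exponent_le one_le_two hu0
  have hQt : (t:ℝ) ≤ Q := by
    have h1 : (2:ℝ) ^ ((t:ℝ)) ≤ Q :=
      Real.rpow_le_rpow_of_exponent_le one_le_two hD
    rw [Real.rpow_natCast] at h1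
    nlinarith
  have hQ1 : (1:ℝ) ≤ Q := by
    rw [hQdef, show (1:ℝ) = (2:ℝ) ^ (0:ℝ) from (Real.rpow_zero 2).symm]
    exact Real.rpow_le_rpow_of_exponent_le one_le_two hD0
  -- exp(-(P*Q)) ≤ exp 1 * exp(-P) * exp(-Q)
  have hPQ : P + Q - 1 ≤ P * Q := by nlinarith
  have hexp1 : Real.exp (-(P * Q)) ≤ Real.exp 1 * Real.exp (-P) * Real.exp (-Q) := by
    rw [← Real.exp_add, ← Real.exp_add]
    exact Real.exp_le_exp.mpr (by linarith)
  -- P * exp(-P) ≤ exp(-1)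
  have hPexp : P * Real.exp (-P) ≤ Real.exp (-1) := by
    have h1 : P ≤ Real.exp (P - 1) := by
      have := Real.add_one_le_exp (P - 1); linarith
    have h2 : Real.exp (P - 1) * Real.exp (-P) = Real.exp (-1) := by
      rw [← Real.exp_add]; ring_nf
    calc P * Real.exp (-P) ≤ Real.exp (P - 1) * Real.exp (-P) :=
          mul_le_mul_of_nonneg_right h1 (Real.exp_pos _).le
      _ = Real.exp (-1) := h2
  have hQexp : Real.exp (-Q) ≤ Real.exp (-(t:ℝ)) :=
    Real.exp_le_exp.mpr (by linarith)
  -- assemble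
  rw [hsplit1, hsplit2]
  have hstep : (P * (2:ℝ) ^ ((2:ℝ)/k)) * Real.exp (-(P * Q)) ≤
      (P * 4) * (Real.exp 1 * Real.exp (-P) * Real.exp (-Q)) := by
    apply mul_le_mul
    · exact mul_le_mul_of_nonneg_left h2k4 (by linarith)
    · exact hexp1
    · exact (Real.exp_pos _).le
    · positivity
  calc P * (2:ℝ) ^ ((2:ℝ)/k) * Real.exp (-(P * Q)) ≤
        (P * 4) * (Real.exp 1 * Real.exp (-P) * Real.exp (-Q)) := hstep
    _ = 4 * Real.exp 1 * (P * Real.exp (-P)) * Real.exp (-Q) := by ring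
    _ ≤ 4 * Real.exp 1 * Real.exp (-1) * Real.exp (-(t:ℝ)) := by
        have h4e : (0:ℝ) ≤ 4 * Real.exp 1 := by positivity
        have h1 : 4 * Real.exp 1 * (P * Real.exp (-P)) ≤ 4 * Real.exp 1 * Real.exp (-1) :=
          mul_le_mul_of_nonneg_left hPexp h4e
        have h2 : (0:ℝ) ≤ 4 * Real.exp 1 * (P * Real.exp (-P)) := by positivity
        calc 4 * Real.exp 1 * (P * Real.exp (-P)) * Real.exp (-Q)
            ≤ 4 * Real.exp 1 * (P * Real.exp (-P)) * Real.exp (-(t:ℝ)) :=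
              mul_le_mul_of_nonneg_left hQexp h2
          _ ≤ 4 * Real.exp 1 * Real.exp (-1) * Real.exp (-(t:ℝ)) :=
              mul_le_mul_of_nonneg_right h1 (Real.exp_pos _).le
    _ = 4 * Real.exp (-(t:ℝ)) := by
        rw [mul_assoc 4, ← Real.exp_add]; norm_num

theorem matousek_expected_dimension_series_bound :
    ∃ c' : ℝ, 0 < c' ∧
      ∀ (k i : ℕ), 1 ≤ k →
        Summable (fun t : ℕ =>
          (2 : ℝ) ^ (((2 : ℝ) ^ (i + 1 + t) + 2) / (k : ℝ)) *
            Real.exp (-((2 : ℝ) ^ ((2 : ℝ) ^ (i + 1 + t) / (k : ℝ) +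
              (2 : ℝ) ^ (i + 1 + t) - (2 : ℝ) ^ (i + 1))))) ∧
        (∑' t : ℕ,
          (2 : ℝ) ^ (((2 : ℝ) ^ (i + 1 + t) + 2) / (k : ℝ)) *
            Real.exp (-((2 : ℝ) ^ ((2 : ℝ) ^ (i + 1 + t) / (k : ℝ) +
              (2 : ℝ) ^ (i + 1 + t) - (2 : ℝ) ^ (i + 1))))) ≤ c' := by
  refine ⟨8, by norm_num, fun k i hk => ?_⟩
  have hgeom : Real.exp (-1) < 1 := Real.exp_lt_one_iff.mpr (by norm_num)
  have hgnn : (0:ℝ) ≤ Real.exp (-1) := (Real.exp_pos _).le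
  have heq : ∀ t : ℕ, 4 * Real.exp (-(t:ℝ)) = 4 * Real.exp (-1) ^ t := by
    intro t
    rw [← Real.exp_nat_mul]
    norm_num
  have hgsum : Summable (fun t : ℕ => 4 * Real.exp (-(t:ℝ)) ) := by
    simp_rw [heq]
    exact (summable_geometric_of_lt_one hgnn hgeom).mul_left 4
  have hnn : ∀ t : ℕ, 0 ≤ (2 : ℝ) ^ (((2 : ℝ) ^ (i + 1 + t) + 2) / (k : ℝ)) *
      Real.exp (-((2 : ℝ) ^ ((2 : ℝ) ^ (i + 1 + t) / (k : ℝ) +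
        (2 : ℝ) ^ (i + 1 + t) - (2 : ℝ) ^ (i + 1)))) := by
    intro t; positivity
  have hle := fun t => matousek_key k i t hk
  have hsum : Summable (fun t : ℕ =>
      (2 : ℝ) ^ (((2 : ℝ) ^ (i + 1 + t) + 2) / (k : ℝ)) *
        Real.exp (-((2 : ℝ) ^ ((2 : ℝ) ^ (i + 1 + t) / (k : ℝ) +
          (2 : ℝ) ^ (i + 1 + t) - (2 : ℝ) ^ (i + 1))))) :=
    Summable.of_nonneg_of_le hnn hle hgsum
  refine ⟨hsum, ?_⟩
  have htsum_le : (∑' t : ℕ,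
      (2 : ℝ) ^ (((2 : ℝ) ^ (i + 1 + t) + 2) / (k : ℝ)) *
        Real.exp (-((2 : ℝ) ^ ((2 : ℝ) ^ (i + 1 + t) / (k : ℝ) +
          (2 : ℝ) ^ (i + 1 + t) - (2 : ℝ) ^ (i + 1))))) ≤
      ∑' t : ℕ, 4 * Real.exp (-(t:ℝ)) :=
    Summable.tsum_le_tsum hle hsum hgsum
  have htsum_g : (∑' t : ℕ, 4 * Real.exp (-(t:ℝ))) = 4 * (1 - Real.exp (-1))⁻¹ := by
    simp_rw [heq]
    rw [tsum_mul_left, tsum_geometric_of_lt_one hgnn hgeom]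
  have he2 : (2:ℝ) ≤ Real.exp 1 := by
    have := Real.add_one_le_exp 1; linarith
  have hexpneg : Real.exp (-1) ≤ 1/2 := by
    rw [Real.exp_neg]
    rw [inv_le_iff_one_le_mul₀ (by positivity)] at *
    nlinarith
  have hbound : 4 * (1 - Real.exp (-1))⁻¹ ≤ 8 := by
    have h1 : (1:ℝ)/2 ≤ 1 - Real.exp (-1) := by linarith
    have h2 : (1 - Real.exp (-1))⁻¹ ≤ 2 := by
      rw [inv_le_iff_one_le_mul₀ (by linarith)]
      nlinarith
    linarith
  linarith [htsum_le, htsum_g ▸ htsum_le]
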